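/- Let μ : ℤ^r → ℤ be a surjective group homomorphism and let ℤ^r act on ℤ[λ, λ^{−1}] by m · a = λ^{μ(m)} a. Then the abelian group of 1-cocycles α : ℤ^r → ℤ[λ, λ^{−1}] modulo the subgroup of coboundaries (maps of the form m ↦ λ^{μ(m)} a − a for some fixed a ∈ ℤ[λ,λ^{−1}]) is infinite cyclic; explicitly, fixing m_0 ∈ ℤ^r with μ(m_0) = 1, the map sending a cocycle α to the sum of the coefficients of the Laurent polynomial α(m_0) induces a group isomorphism from the quotient (cocycles modulo coboundaries) onto ℤ. -/

import Mathlib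

noncomputable section

/-- The Laurent polynomial ring `ℤ[λ, λ⁻¹]`, i.e. the group ring `ℤ[ℤ]`. -/
abbrev LaurentZ : Type := AddMonoidAlgebra ℤ ℤ

/-- The monomial `λ^u` in `ℤ[λ, λ⁻¹]`. -/
def lam (u : ℤ) : LaurentZ := AddMonoidAlgebra.single u 1

/-- The group of 1-cocycles for the action `m • a = λ^{μ(m)} a` of `ℤ^r` on `ℤ[λ, λ⁻¹]`. -/
def cocycles {r : ℕ} (μ : (Fin r → ℤ) →+ ℤ) :
    AddSubgroup ((Fin r → ℤ) → LaurentZ) where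
  carrier := {α | ∀ m m' : Fin r → ℤ, α (m + m') = lam (μ m) * α m' + α m}
  zero_mem' := by intro m m'; simp
  add_mem' := by
    intro a b ha hb m m'
    simp only [Pi.add_apply, ha m m', hb m m']
    ring
  neg_mem' := by
    intro a ha m m'
    simp only [Pi.neg_apply, ha m m']
    ring

/-- The group of 1-coboundaries `m ↦ λ^{μ(m)} a − a`. -/
def coboundaries {r : ℕ} (μ : (Fin r → ℤ) →+ ℤ) :
    AddSubgroup ((Fin r → ℤ) → LaurentZ) where
  carrier := {α | ∃ a : LaurentZ, ∀ m : Fin r → ℤ, α m = lam (μ m) * a - a}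
  zero_mem' := ⟨0, by intro m; simp⟩
  add_mem' := by
    rintro α β ⟨a, ha⟩ ⟨b, hb⟩
    refine ⟨a + b, fun m => ?_⟩
    simp only [Pi.add_apply, ha m, hb m]
    ring
  neg_mem' := by
    rintro α ⟨a, ha⟩
    refine ⟨-a, fun m => ?_⟩
    simp only [Pi.neg_apply, ha m]
    ring

/-- The sum-of-coefficients ring map `ℤ[λ,λ⁻¹] → ℤ` (evaluation at `λ = 1`). -/
def sumCoeffs (p : LaurentZ) : ℤ := p.coeff.sum fun _ c => c

/-! ### Auxiliary material -/

open LaurentPolynomial Polynomial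

def sc : LaurentZ →+* ℤ := ((AddMonoidAlgebra.lift ℤ ℤ ℤ) 1).toRingHom

lemma sumCoeffs_eq_sc (p : LaurentZ) : sumCoeffs p = sc p := by
  show sumCoeffs p = ((AddMonoidAlgebra.lift ℤ ℤ ℤ) 1) p
  rw [AddMonoidAlgebra.lift_apply]
  simp [sumCoeffs]

lemma lam_mul (u v : ℤ) : lam u * lam v = lam (u + v) := by
  rw [lam, lam, lam, AddMonoidAlgebra.single_mul_single, one_mul]

lemma lam_zero : lam 0 = 1 := rfl

lemma lam_eq_T (u : ℤ) : lam u = LaurentPolynomial.T u := rfl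

lemma sc_lam (u : ℤ) : sc (lam u) = 1 := by
  show ((AddMonoidAlgebra.lift ℤ ℤ ℤ) 1) (AddMonoidAlgebra.single u 1) = 1
  rw [AddMonoidAlgebra.lift_single]
  simp

lemma lam_one_sub_one_ne : (lam 1 - 1 : LaurentZ) ≠ 0 := by
  rw [sub_ne_zero, lam, AddMonoidAlgebra.one_def]
  exact fun h => by simpa using AddMonoidAlgebra.single_inj.mp h

lemma cancel {x y : LaurentZ} (h : (lam 1 - 1) * x = (lam 1 - 1) * y) : x = y :=
  mul_left_cancel₀ lam_one_sub_one_ne h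

lemma sc_toLaurent (f : Polynomial ℤ) : sc (Polynomial.toLaurent f) = f.eval 1 := by
  have : sc.comp Polynomial.toLaurent = Polynomial.evalRingHom (1 : ℤ) := by
    apply Polynomial.ringHom_ext
    · intro a
      rw [show (Polynomial.C (a : ℤ) : Polynomial ℤ) = (a : Polynomial ℤ) by simp]
      simp
    · simp only [RingHom.coe_comp, Function.comp_apply, Polynomial.toLaurent_X,
        Polynomial.evalRingHom, Polynomial.coe_eval₂RingHom, Polynomial.eval₂_X]
      rw [← lam_eq_T, sc_lam]
  exact RingHom.congr_fun this f

lemma exists_factor (p : LaurentZ) (h : sc p = 0) :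
    ∃ q : LaurentZ, p = (lam 1 - 1) * q := by
  obtain ⟨n, f, hf⟩ := LaurentPolynomial.exists_T_pow (p : LaurentPolynomial ℤ)
  have hroot : f.eval 1 = 0 := by
    rw [← sc_toLaurent, hf, map_mul, ← lam_eq_T, sc_lam, h, zero_mul]
  obtain ⟨q, hq⟩ := Polynomial.dvd_iff_isRoot.mpr hroot
  refine ⟨Polynomial.toLaurent q * LaurentPolynomial.T (-(n : ℤ)), ?_⟩
  have hp : p = Polynomial.toLaurent f * LaurentPolynomial.T (-(n : ℤ)) := by
    rw [hf, mul_assoc, ← LaurentPolynomial.T_add]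
    simp
  rw [hp, hq, map_mul, map_sub, Polynomial.toLaurent_X, map_one, ← lam_eq_T]
  simp [Polynomial.toLaurent_C]
  ring

lemma sc_lam_sub_one (k : ℤ) : sc (lam k - 1) = 0 := by
  rw [map_sub, sc_lam, map_one, sub_self]

def zeta (k : ℤ) : LaurentZ := Classical.choose (exists_factor _ (sc_lam_sub_one k))

lemma zeta_spec (k : ℤ) : lam k - 1 = (lam 1 - 1) * zeta k :=
  Classical.choose_spec (exists_factor _ (sc_lam_sub_one k))

lemma zeta_add (k k' : ℤ) : zeta (k + k') = lam k * zeta k' + zeta k := by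
  apply cancel
  rw [← zeta_spec, mul_add,
    show (lam 1 - 1) * (lam k * zeta k') = lam k * ((lam 1 - 1) * zeta k') by ring,
    ← zeta_spec, ← zeta_spec, ← lam_mul]
  ring

lemma zeta_one : zeta 1 = 1 := by
  apply cancel
  rw [← zeta_spec, mul_one]

/-- The evaluation homomorphism on cocycles. -/
def phi {r : ℕ} (μ : (Fin r → ℤ) →+ ℤ) (m₀ : Fin r → ℤ) : cocycles μ →+ ℤ where
  toFun α := sc ((α : (Fin r → ℤ) → LaurentZ) m₀)
  map_zero' := by simp
  map_add' := fun a b => by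
    simp only [AddSubgroup.coe_add, Pi.add_apply, map_add]

lemma cocycle_zero {r : ℕ} {μ : (Fin r → ℤ) →+ ℤ} {γ : (Fin r → ℤ) → LaurentZ}
    (hγ : γ ∈ cocycles μ) : γ 0 = 0 := by
  have := hγ 0 0
  rw [add_zero, map_zero, lam_zero, one_mul] at this
  exact add_eq_left.mp this.symm


lemma cocycle_neg_zero {r : ℕ} {μ : (Fin r → ℤ) →+ ℤ} {γ : (Fin r → ℤ) → LaurentZ}
    (hγ : γ ∈ cocycles μ) {m : Fin r → ℤ} (hm : γ m = 0) : γ (-m) = 0 := by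
  have := hγ (-m) m
  rw [neg_add_cancel, cocycle_zero hγ, hm, mul_zero, zero_add] at this
  exact this.symm

lemma cocycle_vanish {r : ℕ} {μ : (Fin r → ℤ) →+ ℤ} {m₀ : Fin r → ℤ} (hm₀ : μ m₀ = 1)
    {γ : (Fin r → ℤ) → LaurentZ} (hγ : γ ∈ cocycles μ) (h0 : γ m₀ = 0) :
    γ = 0 := by
  have hk : ∀ k : Fin r → ℤ, μ k = 0 → γ k = 0 := by
    intro k hkμ
    have e1 := hγ k m₀
    have e2 := hγ m₀ k
    rw [hkμ, lam_zero, one_mul, h0, zero_add, add_comm] at e1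
    rw [hm₀, h0, add_zero, e1] at e2
    have : (lam 1 - 1) * γ k = 0 := by rw [sub_mul, one_mul, ← e2, sub_self]
    rcases mul_eq_zero.mp this with h | h
    · exact absurd h lam_one_sub_one_ne
    · exact h
  have hn : ∀ n : ℕ, γ ((n : ℤ) • m₀) = 0 := by
    intro n
    induction n with
    | zero => simpa using cocycle_zero hγ
    | succ n ih =>
      have := hγ m₀ ((n : ℤ) • m₀)
      rw [show m₀ + (n : ℤ) • m₀ = ((n : ℤ) + 1) • m₀ by
        rw [add_smul, one_smul, add_comm], h0, ih, mul_zero, add_zero] at this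
      rw [show ((n + 1 : ℕ) : ℤ) = (n : ℤ) + 1 by push_cast; ring]
      exact this
  have hz : ∀ n : ℤ, γ (n • m₀) = 0 := by
    intro n
    rcases Int.natAbs_eq n with h | h
    · rw [h]; exact hn n.natAbs
    · rw [h, neg_smul]
      exact cocycle_neg_zero hγ (hn n.natAbs)
  funext m
  have hkμ : μ (m - μ m • m₀) = 0 := by
    rw [map_sub, map_zsmul, hm₀, smul_eq_mul, mul_one, sub_self]
  have hdec : m = μ m • m₀ + (m - μ m • m₀) := by abel
  have := hγ (μ m • m₀) (m - μ m • m₀)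
  rw [← hdec, hk _ hkμ, mul_zero, zero_add, hz (μ m)] at this
  simpa using this

lemma coboundary_cocycle {r : ℕ} (μ : (Fin r → ℤ) →+ ℤ) (a : LaurentZ) :
    (fun m => lam (μ m) * a - a) ∈ cocycles μ := by
  intro m m'
  simp only [map_add, ← lam_mul]
  ring

lemma ker_eq {r : ℕ} (μ : (Fin r → ℤ) →+ ℤ) (m₀ : Fin r → ℤ) (hm₀ : μ m₀ = 1) :
    (coboundaries μ).addSubgroupOf (cocycles μ) = (phi μ m₀).ker := by
  ext α
  rw [AddSubgroup.mem_addSubgroupOf, AddMonoidHom.mem_ker]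
  constructor
  · rintro ⟨a, ha⟩
    show sc ((α : (Fin r → ℤ) → LaurentZ) m₀) = 0
    rw [ha m₀, map_sub, map_mul, sc_lam, one_mul, sub_self]
  · intro h
    obtain ⟨a, ha⟩ := exists_factor ((α : (Fin r → ℤ) → LaurentZ) m₀) h
    refine ⟨a, fun m => ?_⟩
    have hγ : ((α : (Fin r → ℤ) → LaurentZ) - fun m => lam (μ m) * a - a) ∈ cocycles μ :=
      AddSubgroup.sub_mem _ α.2 (coboundary_cocycle μ a)
    have h0 : ((α : (Fin r → ℤ) → LaurentZ) - fun m => lam (μ m) * a - a) m₀ = 0 := by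
      simp only [Pi.sub_apply, ha, hm₀]
      ring
    have := congrFun (cocycle_vanish hm₀ hγ h0) m
    simp only [Pi.sub_apply, Pi.zero_apply, sub_eq_zero] at this
    exact this

def zetaCocycle {r : ℕ} (μ : (Fin r → ℤ) →+ ℤ) : cocycles μ :=
  ⟨fun m => zeta (μ m), by
    intro m m'
    show zeta (μ (m + m')) = lam (μ m) * zeta (μ m') + zeta (μ m)
    rw [map_add, zeta_add]⟩

lemma phi_surj {r : ℕ} (μ : (Fin r → ℤ) →+ ℤ) (m₀ : Fin r → ℤ) (hm₀ : μ m₀ = 1) :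
    Function.Surjective (phi μ m₀) := by
  have h1 : phi μ m₀ (zetaCocycle μ) = 1 := by
    show sc (zeta (μ m₀)) = 1
    rw [hm₀, zeta_one, map_one]
  intro n
  exact ⟨n • zetaCocycle μ, by rw [map_zsmul, h1, smul_eq_mul, mul_one]⟩

theorem first_cohomology_infinite_cyclic {r : ℕ} (μ : (Fin r → ℤ) →+ ℤ)
    (hμ : Function.Surjective μ) (m₀ : Fin r → ℤ) (hm₀ : μ m₀ = 1) :
    ∃ e : (cocycles μ ⧸ (coboundaries μ).addSubgroupOf (cocycles μ)) ≃+ ℤ,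
      ∀ α : cocycles μ,
        e (QuotientAddGroup.mk α) = sumCoeffs ((α : (Fin r → ℤ) → LaurentZ) m₀) := by
  refine ⟨(QuotientAddGroup.quotientAddEquivOfEq (ker_eq μ m₀ hm₀)).trans
    (QuotientAddGroup.quotientKerEquivOfSurjective (phi μ m₀) (phi_surj μ m₀ hm₀)),
    fun α => ?_⟩
  rw [sumCoeffs_eq_sc]
  rfl
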